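/- Let A be a discrete small category, let F, G : A ⥤ B be two functors into a small category B, and let Q : B ⥤ Q be the coequalizer of F and G in Cat. Then Q reflects isomorphisms: for every morphism f of B, if Q(f) is an isomorphism in Q, then f is an isomorphism in B. -/

import Mathlib

open CategoryTheory Limits Relation

universe u

namespace CoeqAux

variable (B : Cat.{u, u})

/-- An arrow of `B` with explicit endpoints. -/
structure Arr : Type u where
  src : B
  tgt : B
  hom : src ⟶ tgt

variable {B}

/-- The identity arrow at `X`. -/
def idArr (X : B) : Arr B := ⟨X, X, 𝟙 X⟩

def IsId (a : Arr B) : Prop := ∃ X, a = idArr X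

/-- Composition of composable arrows. -/
def mergeArr (a b : Arr B) (h : a.tgt = b.src) : Arr B :=
  ⟨a.src, b.tgt, a.hom ≫ eqToHom h ≫ b.hom⟩

lemma merge_id_left (X : B) (b : Arr B) (h : (idArr X).tgt = b.src) :
    mergeArr (idArr X) b h = b := by
  cases b with
  | mk s t f =>
    dsimp [idArr] at h
    subst h
    simp [mergeArr, idArr]

lemma merge_id_right (a : Arr B) (X : B) (h : a.tgt = (idArr X).src) :
    mergeArr a (idArr X) h = a := by
  cases a with
  | mk s t f =>
    dsimp [idArr] at h
    subst h
    simp [mergeArr, idArr]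

lemma merge_assoc (a b c : Arr B) (h1 : a.tgt = b.src) (h2 : b.tgt = c.src) :
    mergeArr (mergeArr a b h1) c h2 = mergeArr a (mergeArr b c h2) h1 := by
  cases a; cases b; cases c
  dsimp [mergeArr] at *
  congr 1
  simp

variable (B) in
/-- One step of reduction of a list of arrows. -/
inductive Step : List (Arr B) → List (Arr B) → Prop
  | drop (a : Arr B) (ha : IsId a) (C : List (Arr B)) : Step (a :: C) C
  | merge (a b : Arr B) (h : a.tgt = b.src) (C : List (Arr B)) :
      Step (a :: b :: C) (mergeArr a b h :: C)
  | cons (a : Arr B) {L L' : List (Arr B)} : Step L L' → Step (a :: L) (a :: L')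

lemma not_step_nil (L : List (Arr B)) : ¬ Step B [] L := by
  intro h; cases h

lemma reflGen_cons (a : Arr B) {L L' : List (Arr B)} (h : ReflGen (Step B) L L') :
    ReflGen (Step B) (a :: L) (a :: L') := by
  cases h with
  | refl => exact .refl
  | single h => exact .single (.cons a h)

lemma reflGen_of_eq {L L' : List (Arr B)} (h : L = L') : ReflGen (Step B) L L' := by
  subst h; exact .refl

lemma step_diamond : ∀ {L M N : List (Arr B)}, Step B L M → Step B L N →
    ∃ K, ReflGen (Step B) M K ∧ ReflGen (Step B) N K := by
  intro L M N h1 h2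
  induction h1 generalizing N with
  | drop a ha C =>
    cases h2 with
    | drop a' ha' C' => exact ⟨C, .refl, .refl⟩
    | merge a' b h' C' =>
      obtain ⟨X, rfl⟩ := ha
      exact ⟨b :: C', .refl, reflGen_of_eq (by rw [merge_id_left])⟩
    | cons a' s => exact ⟨_, .single s, .single (.drop a ha _)⟩
  | merge a b h C =>
    cases h2 with
    | drop a' ha' C' =>
      obtain ⟨X, rfl⟩ := ha'
      exact ⟨b :: C, reflGen_of_eq (by rw [merge_id_left]), .refl⟩
    | merge a' b' h' C' => exact ⟨_, .refl, .refl⟩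
    | cons a' s =>
      cases s with
      | drop x hb C2 =>
        obtain ⟨X, rfl⟩ := hb
        exact ⟨a :: C, reflGen_of_eq (by rw [merge_id_right]), .refl⟩
      | merge x c h2 C2 =>
        refine ⟨mergeArr a (mergeArr b c h2) h :: C2, ?_, ?_⟩
        · have s1 : Step B (mergeArr a b h :: c :: C2)
              (mergeArr (mergeArr a b h) c h2 :: C2) := .merge (mergeArr a b h) c h2 C2
          rw [merge_assoc] at s1
          exact .single s1
        · exact .single (.merge a (mergeArr b c h2) h C2)
      | cons x s' =>
        exact ⟨mergeArr a b h :: _, .single (.cons _ s'), .single (.merge a b h _)⟩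
  | cons a s ih =>
    cases h2 with
    | drop a' ha' C' => exact ⟨_, .single (.drop a ha' _), .single s⟩
    | merge a' b' h' C' =>
      cases s with
      | drop x hb C2 =>
        obtain ⟨X, rfl⟩ := hb
        refine ⟨_, .refl, reflGen_of_eq ?_⟩
        rw [merge_id_right]
      | merge x c h2 C2 =>
        refine ⟨mergeArr a (mergeArr b' c h2) h' :: C2, ?_, ?_⟩
        · exact .single (.merge a (mergeArr b' c h2) h' C2)
        · have s1 : Step B (mergeArr a b' h' :: c :: C2)
              (mergeArr (mergeArr a b' h') c h2 :: C2) := .merge (mergeArr a b' h') c h2 C2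
          rw [merge_assoc] at s1
          exact .single s1
      | cons x s'' =>
        exact ⟨mergeArr a b' h' :: _, .single (.merge a b' h' _), .single (.cons _ s'')⟩
    | cons a' s' =>
      obtain ⟨K, r1, r2⟩ := ih s'
      exact ⟨a :: K, reflGen_cons a r1, reflGen_cons a r2⟩


section Quot

variable {A : Cat.{u, u}} (F G : A ⟶ B)

/-- The gluing relation on objects of `B`. -/
def Rel (X Y : B) : Prop := ∃ a : A, F.toFunctor.obj a = X ∧ G.toFunctor.obj a = Y

/-- Glued objects. -/
def Q := Quot (Rel F G)

/-- Projection to glued objects. -/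
def pq (X : B) : Q F G := Quot.mk _ X

/-- A list of arrows forming a chain from `u` to `v` through glued objects. -/
def Chain : List (Arr B) → Q F G → Q F G → Prop
  | [], u, v => u = v
  | a :: L, u, v => pq F G a.src = u ∧ Chain L (pq F G a.tgt) v

lemma chain_append {L M : List (Arr B)} {u v w : Q F G} (hL : Chain F G L u v)
    (hM : Chain F G M v w) : Chain F G (L ++ M) u w := by
  induction L generalizing u with
  | nil => cases hL; exact hM
  | cons a L ih => exact ⟨hL.1, ih hL.2⟩

lemma chain_step {L L' : List (Arr B)} (s : Step B L L') :
    ∀ {u v : Q F G}, Chain F G L u v → Chain F G L' u v := by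
  induction s with
  | drop a ha C =>
    intro u v h
    obtain ⟨X, rfl⟩ := ha
    exact h.1 ▸ h.2
  | merge a b h C =>
    intro u v hc
    exact ⟨hc.1, hc.2.2⟩
  | cons a s ih =>
    intro u v h
    exact ⟨h.1, ih h.2⟩

lemma chain_rtg {L L' : List (Arr B)} (s : ReflTransGen (Step B) L L')
    {u v : Q F G} (h : Chain F G L u v) : Chain F G L' u v := by
  induction s with
  | refl => exact h
  | tail _ s ih => exact chain_step F G s ih

/-- Morphisms in the quotient category. -/
def WHom (u v : Q F G) : Type u :=
  Quot (fun (L L' : {L : List (Arr B) // Chain F G L u v}) => Step B L.1 L'.1)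

lemma step_append_left {L L' : List (Arr B)} (s : Step B L L') (M : List (Arr B)) :
    Step B (L ++ M) (L' ++ M) := by
  induction s with
  | drop a ha C => exact .drop a ha _
  | merge a b h C => exact .merge a b h _
  | cons a s ih => exact .cons a ih

lemma step_append_right (L : List (Arr B)) {M M' : List (Arr B)} (s : Step B M M') :
    Step B (L ++ M) (L ++ M') := by
  induction L with
  | nil => exact s
  | cons a L ih => exact .cons a ih

instance : Category.{u} (Q F G) where
  Hom u v := WHom F G u v
  id u := Quot.mk _ ⟨[], rfl⟩
  comp {u v w} α β :=
    Quot.lift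
      (fun L => Quot.lift
        (fun M => (Quot.mk _ ⟨L.1 ++ M.1, chain_append F G L.2 M.2⟩ : WHom F G u w))
        (fun M M' hM => Quot.sound (step_append_right L.1 hM)) β)
      (fun L L' hL => by
        induction β using Quot.ind with
        | mk M => exact Quot.sound (step_append_left hL M.1)) α
  id_comp {u v} α := by
    induction α using Quot.ind with
    | mk L => rfl
  comp_id {u v} α := by
    induction α using Quot.ind with
    | mk L => exact congrArg (Quot.mk _) (Subtype.ext (List.append_nil _))
  assoc {u v w x} α β γ := by
    induction α using Quot.ind with
    | mk L =>
      induction β using Quot.ind with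
      | mk M =>
        induction γ using Quot.ind with
        | mk N => exact congrArg (Quot.mk _) (Subtype.ext (List.append_assoc L.1 M.1 N.1))


lemma wmk_eq_of_step {u v : Q F G} {L M : List (Arr B)} (s : Step B L M)
    (hL : Chain F G L u v) (hM : Chain F G M u v) :
    (Quot.mk _ ⟨L, hL⟩ : WHom F G u v) = Quot.mk _ ⟨M, hM⟩ :=
  Quot.sound (s : Step B (⟨L, hL⟩ : {L : List (Arr B) // Chain F G L u v}).1 (⟨M, hM⟩ :
    {L : List (Arr B) // Chain F G L u v}).1)

lemma wmk_eq_of_eq {u v : Q F G} {L M : List (Arr B)} (hL : Chain F G L u v)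
    (hM : Chain F G M u v) (h : L = M) :
    (Quot.mk _ ⟨L, hL⟩ : WHom F G u v) = Quot.mk _ ⟨M, hM⟩ := by
  subst h; rfl

/-- The quotient functor. -/
def Tfun : B ⥤ Q F G where
  obj := pq F G
  map {X Y} f := Quot.mk _ ⟨[⟨X, Y, f⟩], ⟨rfl, rfl⟩⟩
  map_id X := Quot.sound (Step.drop (idArr X) ⟨X, rfl⟩ [])
  map_comp {X Y Z} f g := by
    refine Eq.symm ?_
    show (Quot.mk _ ⟨[(⟨X, Y, f⟩ : Arr B), ⟨Y, Z, g⟩], ⟨rfl, rfl, rfl⟩⟩ :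
        WHom F G (pq F G X) (pq F G Z)) = Quot.mk _ ⟨[(⟨X, Z, f ≫ g⟩ : Arr B)], ⟨rfl, rfl⟩⟩
    refine Eq.trans (wmk_eq_of_step F G (Step.merge ⟨X, Y, f⟩ ⟨Y, Z, g⟩ rfl []) _
      ⟨rfl, rfl⟩) ?_
    exact wmk_eq_of_eq F G _ _ (by simp [mergeArr])

end Quot

/-- A list with no possible reduction step. -/
def Reduced (L : List (Arr B)) : Prop := ∀ L', ¬ Step B L L'

lemma reduced_nil_of_rtg {L : List (Arr B)} (h : Reduced L)
    (r : ReflTransGen (Step B) L []) : L = [] := by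
  rcases r.cases_head with h' | ⟨c, hc, -⟩
  · exact h'
  · exact absurd hc (h _)

lemma step_length {L L' : List (Arr B)} (s : Step B L L') : L'.length + 1 = L.length := by
  induction s with
  | drop a ha C => simp
  | merge a b h C => simp
  | cons a s ih => simpa using ih

lemma exists_reduced_aux : ∀ (n : ℕ) (L : List (Arr B)), L.length ≤ n →
    ∃ M, ReflTransGen (Step B) L M ∧ Reduced M := by
  intro n
  induction n with
  | zero =>
    intro L hL
    have : L = [] := List.eq_nil_of_length_eq_zero (Nat.le_zero.mp hL)
    subst this
    exact ⟨[], .refl, fun L' s => not_step_nil L' s⟩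
  | succ n ih =>
    intro L hL
    by_cases h : ∃ L', Step B L L'
    · obtain ⟨L', s⟩ := h
      have hl := step_length s
      obtain ⟨M, r, hr⟩ := ih L' (by omega)
      exact ⟨M, .head s r, hr⟩
    · exact ⟨L, .refl, fun L' s => h ⟨L', s⟩⟩

lemma exists_reduced (L : List (Arr B)) :
    ∃ M, ReflTransGen (Step B) L M ∧ Reduced M :=
  exists_reduced_aux L.length L le_rfl

lemma join_of_eqvGen {L M : List (Arr B)} (h : EqvGen (Step B) L M) :
    Join (ReflTransGen (Step B)) L M := by
  have equiv : Equivalence (Join (ReflTransGen (Step B))) :=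
    Relation.equivalence_join_reflTransGen (fun a b c hab hac => by
      obtain ⟨K, r1, r2⟩ := step_diamond hab hac
      exact ⟨K, r1, r2.to_reflTransGen⟩)
  induction h with
  | rel x y h => exact ⟨y, ReflTransGen.single h, ReflTransGen.refl⟩
  | refl x => exact equiv.refl x
  | symm x y _ ih => exact equiv.symm ih
  | trans x y z _ _ ih1 ih2 => exact equiv.trans ih1 ih2

lemma rtg_nil_of_eqvGen {L : List (Arr B)} (h : EqvGen (Step B) L []) :
    ReflTransGen (Step B) L [] := by
  obtain ⟨d, h1, h2⟩ := join_of_eqvGen h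
  rcases h2.cases_head with h' | ⟨c, hc, -⟩
  · rw [← h'] at h1
    exact h1
  · exact absurd hc (not_step_nil _)

lemma isIso_of_isId {X Y : B} {f : X ⟶ Y} (h : IsId (⟨X, Y, f⟩ : Arr B)) : IsIso f := by
  obtain ⟨X0, he⟩ := h
  simp only [idArr] at he
  injection he with e1 e2 e3
  subst e1
  subst e2
  rw [eq_of_heq e3]
  infer_instance

section Quot2

variable {A : Cat.{u, u}} (F G : A ⟶ B)

lemma eqvGen_of_quot_eq {u v : Q F G} {L M : {L : List (Arr B) // Chain F G L u v}}
    (h : (Quot.mk _ L : WHom F G u v) = Quot.mk _ M) : EqvGen (Step B) L.1 M.1 := by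
  have h' := Quot.eqvGen_exact h
  clear h
  induction h' with
  | rel x y hs => exact .rel _ _ hs
  | refl x => exact .refl _
  | symm x y _ ih => exact .symm _ _ ih
  | trans x y z _ _ ih1 ih2 => exact .trans _ _ _ ih1 ih2

lemma wmk_eq_of_rtg {u v : Q F G} {L M : List (Arr B)} (r : ReflTransGen (Step B) L M)
    (hL : Chain F G L u v) :
    (Quot.mk _ ⟨L, hL⟩ : WHom F G u v) = Quot.mk _ ⟨M, chain_rtg F G r hL⟩ := by
  induction r with
  | refl => rfl
  | tail r s ih => exact ih.trans (wmk_eq_of_step F G s _ _)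

lemma extract {X Y : B} (f : X ⟶ Y) (P : List (Arr B)) (hred : Reduced P)
    (h1 : ReflTransGen (Step B) ((⟨X, Y, f⟩ : Arr B) :: P) [])
    (h2 : ReflTransGen (Step B) (P ++ [(⟨X, Y, f⟩ : Arr B)]) []) : IsIso f := by
  rcases h1.cases_head with h | ⟨L1, s1, r1⟩
  · exact absurd h (by simp)
  cases s1 with
  | drop a ha C => exact isIso_of_isId ha
  | cons a s' => exact absurd s' (hred _)
  | merge a b hcomp C =>
    obtain ⟨s, t, g⟩ := b
    dsimp at hcomp
    subst hcomp
    rcases r1.cases_head with h | ⟨L2, s2, r2⟩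
    · exact absurd h (by simp)
    cases s2 with
    | merge m c hcomp' C' =>
      exact absurd (Step.merge ⟨Y, t, g⟩ c hcomp' C') (hred _)
    | cons m s' => exact absurd (Step.cons _ s') (hred _)
    | drop m hm C' =>
      have hCred : Reduced C := fun L' s => hred _ (.cons _ s)
      have hC : C = [] := reduced_nil_of_rtg hCred r2
      subst hC
      obtain ⟨X0, he⟩ := hm
      simp only [mergeArr, idArr] at he
      injection he with e1 e2 e3
      subst e2
      subst e1
      have eq1 := eq_of_heq e3
      simp only [eqToHom_refl, Category.id_comp] at eq1
      -- second equation
      rcases h2.cases_head with h | ⟨L3, s4, r4⟩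
      · exact absurd h (by simp)
      cases s4 with
      | drop a' ha' C'' =>
        obtain ⟨X1, he2⟩ := ha'
        simp only [idArr] at he2
        injection he2 with u1 u2 u3
        subst u2
        subst u1
        have hg := eq_of_heq u3
        rw [hg] at eq1
        have hf : f = 𝟙 _ := by simpa using eq1
        rw [hf]
        infer_instance
      | cons a' s5 =>
        cases s5 with
        | drop a'' ha'' C3 => exact isIso_of_isId ha''
        | cons a'' s6 => exact absurd s6 (not_step_nil _)
      | merge a' b' hcomp2 C'' =>
        rcases r4.cases_head with h | ⟨L4, s5, r5⟩
        · exact absurd h (by simp)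
        cases s5 with
        | cons a'' s6 => exact absurd s6 (not_step_nil _)
        | drop m2 hm2 C3 =>
          obtain ⟨X1, he3⟩ := hm2
          simp only [mergeArr, idArr] at he3
          injection he3 with v1 v2 v3
          subst v1
          have eq2 := eq_of_heq v3
          simp only [eqToHom_refl, Category.id_comp] at eq2
          exact ⟨⟨g, eq1, eq2⟩⟩

lemma conservative {X Y : B} (f : X ⟶ Y) (hf : IsIso ((Tfun F G).map f)) : IsIso f := by
  obtain ⟨β, hβ1, hβ2⟩ := hf
  obtain ⟨⟨P0, hP0⟩, hrep⟩ := Quot.exists_rep β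
  obtain ⟨P, hPr, hPred⟩ := exists_reduced P0
  have hP : Chain F G P (pq F G Y) (pq F G X) := chain_rtg F G hPr hP0
  have hβP : β = Quot.mk _ ⟨P, hP⟩ := by
    rw [← hrep]
    exact wmk_eq_of_rtg F G hPr hP0
  rw [hβP] at hβ1 hβ2
  have e1 : EqvGen (Step B) ((⟨X, Y, f⟩ : Arr B) :: P) [] := by
    have : (Quot.mk _ ⟨(⟨X, Y, f⟩ : Arr B) :: P, ⟨rfl, hP⟩⟩ :
        WHom F G (pq F G X) (pq F G X)) = Quot.mk _ ⟨[], rfl⟩ := hβ1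
    exact eqvGen_of_quot_eq F G this
  have e2 : EqvGen (Step B) (P ++ [(⟨X, Y, f⟩ : Arr B)]) [] := by
    have : (Quot.mk _ ⟨P ++ [(⟨X, Y, f⟩ : Arr B)],
        chain_append F G hP ⟨rfl, rfl⟩⟩ :
        WHom F G (pq F G Y) (pq F G Y)) = Quot.mk _ ⟨[], rfl⟩ := hβ2
    exact eqvGen_of_quot_eq F G this
  exact extract f P hPred (rtg_nil_of_eqvGen e1) (rtg_nil_of_eqvGen e2)

end Quot2

end CoeqAux

open CoeqAux in
/-- The coequalizer, in the category `Cat` of small categories, of two functors defined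
on a discrete category reflects isomorphisms. -/
theorem coequalizer_of_discrete_reflectsIsomorphisms
    (A B : Cat.{u, u})
    (hA : ∀ (X Y : A) (f : X ⟶ Y), ∃ h : X = Y, f = eqToHom h)
    (F G : A ⟶ B) (c : Cofork F G) (hc : IsColimit c) :
    ∀ {X Y : B} (f : X ⟶ Y), IsIso (c.π.toFunctor.map f) → IsIso f := by
  intro X Y f hf
  let W : Cat.{u, u} := Cat.of (Q F G)
  let T : B ⟶ W := (Tfun F G).toCatHom
  have w : F ≫ T = G ≫ T := by
    apply Cat.ext
    apply CategoryTheory.Functor.ext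
    · intro a b φ
      obtain ⟨hab, hφ⟩ := hA a b φ
      subst hab
      rw [hφ]
      simp
    · intro a
      exact Quot.sound ⟨a, rfl, rfl⟩
  let m := Cofork.IsColimit.desc hc T w
  have hm : c.π ≫ m = T := Cofork.IsColimit.π_desc' hc T w
  have key := Functor.congr_hom (congrArg Cat.Hom.toFunctor hm).symm f
  have hiso : IsIso ((Tfun F G).map f) := by
    rw [show (Tfun F G).map f = T.toFunctor.map f from rfl, key]
    haveI := hf
    haveI : IsIso ((c.π ≫ m).toFunctor.map f) := by
      show IsIso (m.toFunctor.map (c.π.toFunctor.map f))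
      infer_instance
    exact IsIso.comp_isIso'
      (eqToIso (Functor.congr_obj (congrArg Cat.Hom.toFunctor hm) X).symm).isIso_hom
      (IsIso.comp_isIso' this
        (eqToIso (Functor.congr_obj (congrArg Cat.Hom.toFunctor hm) Y)).isIso_hom)
  exact conservative F G f hiso
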